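/- Let X be a vector lattice with a cofinal family of projection bands. A system {x_γ} in X is d-independent in the band-free sense (for every band B: Σ c_j x_{γ_j} ⊥ B with nonzero c_j implies all x_{γ_j} ⊥ B) if and only if it is d-independent in the projection-band sense (for every projection band B, the nonzero projections P_B x_γ are linearly independent). -/
import Mathlib


/-- Disjointness in a vector lattice. -/
def disjt {X : Type*} [Lattice X] [AddCommGroup X] (x y : X) : Prop := |x| ⊓ |y| = 0

/-- Disjoint complement of a set. -/
def dComp {X : Type*} [Lattice X] [AddCommGroup X] (S : Set X) : Set X :=
  {x | ∀ y ∈ S, disjt x y}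

/-- A band (in an Archimedean vector lattice) is a disjoint complement. -/
def IsBand {X : Type*} [Lattice X] [AddCommGroup X] (B : Set X) : Prop :=
  ∃ S : Set X, B = dComp S

/-- A projection band. -/
def IsProjBand {X : Type*} [Lattice X] [AddCommGroup X] (B : Set X) : Prop :=
  IsBand B ∧ ∀ x : X, ∃ b ∈ B, ∃ c ∈ dComp B, x = b + c

/-- `P` is the band-projection onto the projection band `B`. -/
def IsBandProjOnto {X : Type*} [Lattice X] [AddCommGroup X] [Module ℝ X]
    (B : Set X) (P : X →ₗ[ℝ] X) : Prop :=
  IsProjBand B ∧ ∀ x : X, P x ∈ B ∧ x - P x ∈ dComp B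

/-- `P` is a band-projection. -/
def IsBandProj {X : Type*} [Lattice X] [AddCommGroup X] [Module ℝ X]
    (P : X →ₗ[ℝ] X) : Prop := ∃ B : Set X, IsBandProjOnto B P

/-- A band preserving operator. -/
def BandPreserving {X : Type*} [Lattice X] [AddCommGroup X] [Module ℝ X]
    (T : X →ₗ[ℝ] X) : Prop := ∀ x y : X, disjt x y → disjt (T x) y

/-- A cofinal family of projection bands. -/
def CofinalProjBands (X : Type*) [Lattice X] [AddCommGroup X] : Prop :=
  ∀ B : Set X, IsBand B → B ≠ {0} →
    ∃ B' : Set X, IsProjBand B' ∧ B' ≠ {0} ∧ B' ⊆ B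

/-- d-independence of a family (band-free sense). -/
def dIndepFam {X : Type*} [Lattice X] [AddCommGroup X] [Module ℝ X]
    {ι : Type*} (f : ι → X) : Prop :=
  ∀ B : Set X, IsBand B → ∀ (t : Finset ι) (c : ι → ℝ),
    (∀ j ∈ t, c j ≠ 0) → (∑ j ∈ t, c j • f j) ∈ dComp B → ∀ j ∈ t, f j ∈ dComp B

/-- d-independence of a set (band-free sense). -/
def dIndepSet {X : Type*} [Lattice X] [AddCommGroup X] [Module ℝ X]
    (s : Set X) : Prop := dIndepFam (fun x : s => (x : X))

/-- A full system of pairwise disjoint bands. -/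
def FullDisjBands {X : Type*} [Lattice X] [AddCommGroup X] (𝒞 : Set (Set X)) : Prop :=
  (∀ B ∈ 𝒞, IsBand B) ∧
  (∀ B ∈ 𝒞, ∀ B' ∈ 𝒞, B ≠ B' → ∀ a ∈ B, ∀ b ∈ B', disjt a b) ∧
  (∀ z : X, (∀ B ∈ 𝒞, z ∈ dComp B) → z = 0)

/-- A d-basis (band-free sense). -/
def IsDBasis {X : Type*} [Lattice X] [AddCommGroup X] [Module ℝ X]
    (s : Set X) : Prop :=
  dIndepSet s ∧ ∀ x : X, ∃ 𝒞 : Set (Set X), FullDisjBands 𝒞 ∧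
    ∀ B ∈ 𝒞, ∃ (t : Finset X) (c : X → ℝ), (↑t ⊆ s) ∧ (∀ e ∈ t, c e ≠ 0) ∧
      (x - ∑ e ∈ t, c e • e) ∈ dComp B

/-- `b` is a semi-component of `x`. -/
def IsSemiComponent {X : Type*} [Lattice X] [AddCommGroup X] [Module ℝ X]
    (x b : X) : Prop :=
  b ≠ 0 ∧ ∃ (𝒞 : Set (Set X)) (c : Set X → ℝ), FullDisjBands 𝒞 ∧
    ∀ B ∈ 𝒞, (b - c B • x) ∈ dComp B

/-- Condition (*): every band has a semi-component of every element not disjoint from it. -/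
def CondStar (X : Type*) [Lattice X] [AddCommGroup X] [Module ℝ X] : Prop :=
  ∀ B : Set X, IsBand B → ∀ x : X, x ∉ dComp B → ∃ b ∈ B, IsSemiComponent x b
/-- Projection-band-sense d-independence of a family. -/
def dIndepProjFam {X : Type*} [Lattice X] [AddCommGroup X] [Module ℝ X]
    {ι : Type*} (f : ι → X) : Prop :=
  ∀ (B : Set X) (P : X →ₗ[ℝ] X), IsBandProjOnto B P →
    ∀ (t : Finset ι) (c : ι → ℝ), (∑ j ∈ t, c j • P (f j)) = 0 →
      ∀ j ∈ t, P (f j) ≠ 0 → c j = 0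

/-- Projection-band-sense d-independence of a set. -/
def dIndepProjSet {X : Type*} [Lattice X] [AddCommGroup X] [Module ℝ X]
    (s : Set X) : Prop := dIndepProjFam (fun x : s => (x : X))

/-- Lateral completeness. -/
def LatComplete (X : Type*) [Lattice X] [AddCommGroup X] : Prop :=
  ∀ S : Set X, (∀ x ∈ S, 0 ≤ x) → S.Pairwise disjt → ∃ b : X, IsLUB S b

/-- Lateral completeness of a subset (sups taken relative to the subset). -/
def LatCompleteIn {X : Type*} [Lattice X] [AddCommGroup X] (X₀ : Set X) : Prop :=
  ∀ S : Set X, S ⊆ X₀ → (∀ x ∈ S, 0 ≤ x) → S.Pairwise disjt →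
    ∃ b ∈ X₀, b ∈ upperBounds S ∧ ∀ b' ∈ X₀, b' ∈ upperBounds S → b ≤ b'

/-- Dedekind completeness of a subset (sups relative to the subset). -/
def DedekindCompleteIn {X : Type*} [Lattice X] [AddCommGroup X] (X₀ : Set X) : Prop :=
  ∀ S : Set X, S ⊆ X₀ → S.Nonempty → (∃ u ∈ X₀, u ∈ upperBounds S) →
    ∃ b ∈ X₀, b ∈ upperBounds S ∧ ∀ b' ∈ X₀, b' ∈ upperBounds S → b ≤ b'

/-- Universal completeness of a subset. -/
def UnivCompleteIn {X : Type*} [Lattice X] [AddCommGroup X] (X₀ : Set X) : Prop :=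
  LatCompleteIn X₀ ∧ DedekindCompleteIn X₀

/-- Disjoint complement of `S` relative to the sublattice `X₀`. -/
def dCompIn {X : Type*} [Lattice X] [AddCommGroup X] (X₀ S : Set X) : Set X :=
  {x | x ∈ X₀ ∧ ∀ y ∈ S, disjt x y}

/-- Bands of the sublattice `X₀`. -/
def IsBandIn {X : Type*} [Lattice X] [AddCommGroup X] (X₀ B : Set X) : Prop :=
  ∃ S : Set X, S ⊆ X₀ ∧ B = dCompIn X₀ S

/-- Projection bands of the sublattice `X₀`. -/
def IsProjBandIn {X : Type*} [Lattice X] [AddCommGroup X] (X₀ B : Set X) : Prop :=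
  IsBandIn X₀ B ∧ ∀ x ∈ X₀, ∃ b ∈ B, ∃ c ∈ dCompIn X₀ B, x = b + c

/-- A band `B` is principally universally complete if each of its principal bands
is universally complete. -/
def PrincUnivCompleteIn {X : Type*} [Lattice X] [AddCommGroup X] (B : Set X) : Prop :=
  ∀ u ∈ B, UnivCompleteIn (dCompIn B (dCompIn B {u}))

/-- d-independence of a family relative to the sublattice `X₀`. -/
def dIndepFamIn {X : Type*} [Lattice X] [AddCommGroup X] [Module ℝ X]
    (X₀ : Set X) {ι : Type*} (f : ι → X) : Prop :=
  ∀ B : Set X, IsBandIn X₀ B → ∀ (t : Finset ι) (c : ι → ℝ),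
    (∀ j ∈ t, c j ≠ 0) → (∑ j ∈ t, c j • f j) ∈ dCompIn X₀ B →
      ∀ j ∈ t, f j ∈ dCompIn X₀ B

/-- A full system of pairwise disjoint bands of the sublattice `X₀`. -/
def FullDisjBandsIn {X : Type*} [Lattice X] [AddCommGroup X]
    (X₀ : Set X) (𝒞 : Set (Set X)) : Prop :=
  (∀ B ∈ 𝒞, IsBandIn X₀ B) ∧
  (∀ B ∈ 𝒞, ∀ B' ∈ 𝒞, B ≠ B' → ∀ a ∈ B, ∀ b ∈ B', disjt a b) ∧
  (∀ z ∈ X₀, (∀ B ∈ 𝒞, z ∈ dCompIn X₀ B) → z = 0)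

/-- A d-basis of the sublattice `X₀`. -/
def IsDBasisIn {X : Type*} [Lattice X] [AddCommGroup X] [Module ℝ X]
    (X₀ : Set X) (s : Set X) : Prop :=
  dIndepFamIn X₀ (fun x : s => (x : X)) ∧
  ∀ x ∈ X₀, ∃ 𝒞 : Set (Set X), FullDisjBandsIn X₀ 𝒞 ∧
    ∀ B ∈ 𝒞, ∃ (t : Finset X) (c : X → ℝ), (↑t ⊆ s) ∧ (∀ e ∈ t, c e ≠ 0) ∧
      (x - ∑ e ∈ t, c e • e) ∈ dCompIn X₀ B

/-- An essentially constant continuous function. -/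
def EssConst {K : Type*} [TopologicalSpace K] (f : C(K, ℝ)) : Prop :=
  ∀ G : Set K, IsOpen G → G.Nonempty →
    ∃ G₁ ⊆ G, IsOpen G₁ ∧ G₁.Nonempty ∧ ∃ c : ℝ, ∀ t ∈ G₁, f t = c


section Aux11
set_option linter.unusedSectionVars false

variable {X : Type*} [Lattice X] [AddCommGroup X] [CovariantClass X X (· + ·) (· ≤ ·)]

namespace DI11

lemma mem_dComp {S : Set X} {x : X} : x ∈ dComp S ↔ ∀ y ∈ S, disjt x y := Iff.rfl

lemma disjt_symm {x y : X} (h : disjt x y) : disjt y x := by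
  unfold disjt at h ⊢; rwa [inf_comm]

lemma disjt_of_le {x z u : X} (h : |x| ≤ u) (hd : u ⊓ |z| = 0) : disjt x z :=
  le_antisymm (hd ▸ inf_le_inf_right _ h) (le_inf (abs_nonneg _) (abs_nonneg _))

lemma disjt_zero (y : X) : disjt 0 y := by
  unfold disjt; rw [abs_zero]; exact inf_eq_left.mpr (abs_nonneg y)

lemma disjt_self_eq_zero {x : X} (h : disjt x x) : x = 0 := by
  unfold disjt at h; rw [inf_idem] at h
  exact le_antisymm (h ▸ le_abs_self x) (neg_nonpos.mp (h ▸ neg_le_abs x))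

lemma inf_add_le {u v w : X} (hu : 0 ≤ u) (hv : 0 ≤ v) (hw : 0 ≤ w) :
    (u + v) ⊓ w ≤ u ⊓ w + v ⊓ w := by
  have h1 : (u + v) ⊓ w ≤ (u ⊓ w) + v := by
    calc (u + v) ⊓ w ≤ (u + v) ⊓ (w + v) :=
          inf_le_inf_left _ (le_add_of_nonneg_right hv)
      _ = (u ⊓ w) + v := (inf_add u w v).symm
  rw [add_inf]
  exact le_inf h1 (inf_le_right.trans (le_add_of_nonneg_left (le_inf hu hw)))

lemma disjt_add {x y z : X} (h1 : disjt x z) (h2 : disjt y z) : disjt (x + y) z := by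
  refine disjt_of_le (abs_add_le x y) (le_antisymm ?_ (le_inf (add_nonneg (abs_nonneg _) (abs_nonneg _)) (abs_nonneg _)))
  calc (|x| + |y|) ⊓ |z| ≤ |x| ⊓ |z| + |y| ⊓ |z| := inf_add_le (abs_nonneg _) (abs_nonneg _) (abs_nonneg _)
    _ = 0 := by rw [h1, h2, add_zero]

lemma disjt_neg {x z : X} (h : disjt x z) : disjt (-x) z := by
  unfold disjt at h ⊢; rwa [abs_neg]

lemma inf_nsmul_eq_zero {x z : X} (h : disjt x z) (n : ℕ) : (n • |x|) ⊓ |z| = 0 := by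
  induction n with
  | zero => rw [zero_smul]; exact inf_eq_left.mpr (abs_nonneg z)
  | succ n ih =>
    refine le_antisymm ?_ (le_inf (nsmul_nonneg (abs_nonneg x) _) (abs_nonneg _))
    have hstep : ((n + 1) • |x|) = |x| + n • |x| := by rw [add_nsmul, one_nsmul, add_comm]
    calc ((n + 1) • |x|) ⊓ |z| = (|x| + n • |x|) ⊓ |z| := by rw [hstep]
      _ ≤ |x| ⊓ |z| + (n • |x|) ⊓ |z| := inf_add_le (abs_nonneg _) (nsmul_nonneg (abs_nonneg _) _) (abs_nonneg _)
      _ = 0 := by rw [h, ih, add_zero]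

variable [Module ℝ X] [PosSMulMono ℝ X]

lemma smul_le_abs_smul_abs (c : ℝ) (x : X) : c • x ≤ |c| • |x| := by
  rcases le_or_gt 0 c with hc | hc
  · rw [abs_of_nonneg hc]
    exact smul_le_smul_of_nonneg_left (le_abs_self x) hc
  · rw [abs_of_neg hc]
    calc c • x = (-c) • (-x) := by rw [neg_smul_neg]
      _ ≤ (-c) • |x| := smul_le_smul_of_nonneg_left (neg_le_abs x) (by linarith)

lemma abs_smul_le (c : ℝ) (x : X) : |c • x| ≤ |c| • |x| := by
  refine abs_le'.mpr ⟨smul_le_abs_smul_abs c x, ?_⟩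
  have h := smul_le_abs_smul_abs (-c) x
  rwa [abs_neg, neg_smul] at h

lemma disjt_smul {x z : X} (c : ℝ) (h : disjt x z) : disjt (c • x) z := by
  obtain ⟨n, hn⟩ := exists_nat_ge |c|
  have hmono : |c| • |x| ≤ (n : ℝ) • |x| := by
    have h0 : (0 : X) ≤ ((n : ℝ) - |c|) • |x| := by
      calc (0 : X) = ((n : ℝ) - |c|) • (0 : X) := (smul_zero _).symm
        _ ≤ ((n : ℝ) - |c|) • |x| :=
            smul_le_smul_of_nonneg_left (abs_nonneg x) (by linarith)
    have h0' : (0 : X) ≤ (n : ℝ) • |x| - |c| • |x| := by rw [← sub_smul]; exact h0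
    exact sub_nonneg.mp h0'
  have h1 : |c • x| ≤ n • |x| := by
    rw [← Nat.cast_smul_eq_nsmul ℝ]
    exact (abs_smul_le c x).trans hmono
  exact disjt_of_le h1 (inf_nsmul_eq_zero h n)

lemma dComp_add_mem {S : Set X} {x y : X} (hx : x ∈ dComp S) (hy : y ∈ dComp S) :
    x + y ∈ dComp S := fun w hw => disjt_add (hx w hw) (hy w hw)

lemma dComp_neg_mem {S : Set X} {x : X} (hx : x ∈ dComp S) : -x ∈ dComp S :=
  fun w hw => disjt_neg (hx w hw)

lemma dComp_sub_mem {S : Set X} {x y : X} (hx : x ∈ dComp S) (hy : y ∈ dComp S) :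
    x - y ∈ dComp S := by
  rw [sub_eq_add_neg]; exact dComp_add_mem hx (dComp_neg_mem hy)

lemma dComp_smul_mem {S : Set X} {x : X} (c : ℝ) (hx : x ∈ dComp S) :
    c • x ∈ dComp S := fun w hw => disjt_smul c (hx w hw)

lemma dComp_zero_mem (S : Set X) : (0 : X) ∈ dComp S := fun w _ => disjt_zero w

lemma dComp_antitone {S T : Set X} (h : S ⊆ T) : dComp T ⊆ dComp S :=
  fun _ hx w hw => hx w (h hw)

lemma eq_zero_of_mem_inter {B : Set X} {x : X} (hx : x ∈ B) (hx' : x ∈ dComp B) :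
    x = 0 := disjt_self_eq_zero (hx' x hx)

lemma band_solid {B : Set X} (hB : IsBand B) {u y : X} (hy : y ∈ B) (h : |u| ≤ |y|) :
    u ∈ B := by
  obtain ⟨S, rfl⟩ := hB
  exact fun w hw => disjt_of_le h (hy w hw)

lemma band_sub_mem {B : Set X} (hB : IsBand B) {x y : X} (hx : x ∈ B) (hy : y ∈ B) :
    x - y ∈ B := by
  obtain ⟨S, rfl⟩ := hB
  exact dComp_sub_mem hx hy

lemma band_add_mem {B : Set X} (hB : IsBand B) {x y : X} (hx : x ∈ B) (hy : y ∈ B) :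
    x + y ∈ B := by
  obtain ⟨S, rfl⟩ := hB
  exact dComp_add_mem hx hy

lemma band_smul_mem {B : Set X} (hB : IsBand B) {x : X} (c : ℝ) (hx : x ∈ B) :
    c • x ∈ B := by
  obtain ⟨S, rfl⟩ := hB
  exact dComp_smul_mem c hx

lemma proj_eq_zero {B : Set X} {P : X →ₗ[ℝ] X} (hP : IsBandProjOnto B P)
    {z : X} (hz : z ∈ dComp B) : P z = 0 := by
  have h1 := (hP.2 z).1
  have h2 := (hP.2 z).2
  have h3 : P z ∈ dComp B := by
    have : P z = z - (z - P z) := (sub_sub_cancel z (P z)).symm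
    rw [this]; exact dComp_sub_mem hz h2
  exact eq_zero_of_mem_inter h1 h3

end DI11

end Aux11

/-- In a vector lattice with a cofinal family of projection bands,
band-free d-independence coincides with projection-band d-independence. -/
theorem dIndep_band_free_iff_proj_sense
    {X : Type*} [Lattice X] [AddCommGroup X] [Module ℝ X]
    [CovariantClass X X (· + ·) (· ≤ ·)] [PosSMulMono ℝ X]
    (hcof : CofinalProjBands X) (s : Set X) :
    dIndepSet s ↔ dIndepProjSet s := by
  classical
  constructor
  · -- band-free ⇒ projection sense
    intro hd B P hP t c hsum j hj hPj
    by_contra hcj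
    set t' := t.filter (fun i => c i ≠ 0) with ht'
    have hj' : j ∈ t' := Finset.mem_filter.mpr ⟨hj, hcj⟩
    have hsum' : (∑ i ∈ t', c i • P ((i : s) : X)) = 0 := by
      rw [ht', Finset.sum_filter_of_ne (f := fun i => c i • P ((i : s) : X))
        (p := fun i => c i ≠ 0)
        (fun i _ hne hci => hne (by simp [hci]))]
      exact hsum
    have hPz : P (∑ i ∈ t', c i • ((i : s) : X)) = 0 := by
      rw [map_sum]
      simpa [map_smul] using hsum'
    have hz : (∑ i ∈ t', c i • ((i : s) : X)) ∈ dComp B := by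
      have h2 := (hP.2 (∑ i ∈ t', c i • ((i : s) : X))).2
      rwa [hPz, sub_zero] at h2
    have hxj : ((j : s) : X) ∈ dComp B :=
      hd B hP.1.1 t' c (fun i hi => (Finset.mem_filter.mp hi).2) hz j hj'
    exact hPj (DI11.proj_eq_zero hP hxj)
  · -- projection sense ⇒ band-free
    intro hp B hB t c hc hsum j hj
    by_contra hxj
    have hex : ∃ y ∈ B, ¬ disjt ((j : s) : X) y := by
      by_contra h
      push_neg at h
      exact hxj (fun y hy => h y hy)
    obtain ⟨y, hyB, hxy⟩ := hex
    set u : X := |((j : s) : X)| ⊓ |y| with hu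
    have hu0 : u ≠ 0 := hxy
    have hupos : (0 : X) ≤ u := le_inf (abs_nonneg _) (abs_nonneg _)
    have huabs : |u| = u := abs_of_nonneg hupos
    have huB : u ∈ B := DI11.band_solid hB hyB (by rw [huabs]; exact inf_le_right)
    have huBu : u ∈ dComp (dComp ({u} : Set X)) :=
      fun w hw => DI11.disjt_symm (hw u (Set.mem_singleton u))
    have hBune : dComp (dComp ({u} : Set X)) ≠ {0} := by
      intro h
      rw [h] at huBu
      exact hu0 huBu
    have hBuB : dComp (dComp ({u} : Set X)) ⊆ B := by
      obtain ⟨S, rfl⟩ := hB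
      intro z hz w hw
      exact hz w (fun v hv => by
        rw [Set.mem_singleton_iff] at hv
        subst hv
        exact DI11.disjt_symm (huB w hw))
    obtain ⟨B', hB'proj, hB'ne, hB'sub⟩ :=
      hcof (dComp (dComp ({u} : Set X))) ⟨_, rfl⟩ hBune
    have hB'band : IsBand B' := hB'proj.1
    have hdec := hB'proj.2
    choose bf hbf cf hcf heq using hdec
    have huniq : ∀ x bb cc, bb ∈ B' → cc ∈ dComp B' → x = bb + cc → bb = bf x := by
      intro x bb cc hbb hcc hx
      have h2 : bb + cc = bf x + cf x := hx.symm.trans (heq x)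
      have hkey : bb - bf x = cf x - cc :=
        sub_eq_sub_iff_add_eq_add.mpr (h2.trans (add_comm _ _))
      have hmem1 : bb - bf x ∈ B' := DI11.band_sub_mem hB'band hbb (hbf x)
      have hmem2 : bb - bf x ∈ dComp B' := by
        rw [hkey]
        exact DI11.dComp_sub_mem (hcf x) hcc
      have := DI11.eq_zero_of_mem_inter hmem1 hmem2
      rw [sub_eq_zero] at this
      exact this
    let P : X →ₗ[ℝ] X :=
      { toFun := bf
        map_add' := fun x z => (huniq (x + z) (bf x + bf z) (cf x + cf z)
            (DI11.band_add_mem hB'band (hbf x) (hbf z))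
            (DI11.dComp_add_mem (hcf x) (hcf z))
            (by conv_lhs => rw [heq x, heq z]
                abel)).symm
        map_smul' := fun r x => by
          simpa using (huniq (r • x) (r • bf x) (r • cf x)
            (DI11.band_smul_mem hB'band r (hbf x))
            (DI11.dComp_smul_mem r (hcf x))
            (by conv_lhs => rw [heq x]
                rw [smul_add])).symm }
    have hPB : IsBandProjOnto B' P := by
      refine ⟨hB'proj, fun x => ⟨hbf x, ?_⟩⟩
      rw [show x - P x = cf x from sub_eq_iff_eq_add'.mpr (heq x)]
      exact hcf x
    have hdanti : dComp B ⊆ dComp B' :=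
      DI11.dComp_antitone (fun z hz => hBuB (hB'sub hz))
    have hsum0 : (∑ i ∈ t, c i • P ((i : s) : X)) = 0 := by
      have h0 : P (∑ i ∈ t, c i • ((i : s) : X)) = 0 :=
        DI11.proj_eq_zero hPB (hdanti hsum)
      rw [map_sum] at h0
      simpa [map_smul] using h0
    have hPj0 : P ((j : s) : X) = 0 := by
      by_contra hne
      exact hc j hj (hp B' P hPB t c hsum0 j hj hne)
    have hxjB' : ((j : s) : X) ∈ dComp B' := by
      have h2 := (hPB.2 ((j : s) : X)).2
      rwa [hPj0, sub_zero] at h2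
    obtain ⟨w, hwB', hw0⟩ : ∃ w ∈ B', w ≠ 0 := by
      by_contra h
      push_neg at h
      apply hB'ne
      apply Set.eq_singleton_iff_unique_mem.mpr
      have h0 : (0 : X) ∈ B' := by
        obtain ⟨S2, hS2⟩ := hB'band
        rw [hS2]
        exact DI11.dComp_zero_mem S2
      exact ⟨h0, h⟩
    have hdw : disjt ((j : s) : X) w := hxjB' w hwB'
    have hduw : disjt u w :=
      DI11.disjt_of_le (by rw [huabs, hu]; exact inf_le_left) hdw
    have hwdu : w ∈ dComp ({u} : Set X) := fun v hv => by
      rw [Set.mem_singleton_iff] at hv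
      subst hv
      exact DI11.disjt_symm hduw
    have hww : disjt w w := (hB'sub hwB') w hwdu
    exact hw0 (DI11.disjt_self_eq_zero hww)
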